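/- Let σ ∈ (0,π), α ∈ (0,1), θ ∈ (α−1, α), and set ρ(z) = z^α/(1+z), ψ(z) = z^{1−α}/(1+z). Then there are constants C > 0 and δ = min{α−θ, θ+1−α} > 0 such that for all k, ℓ ∈ ℤ, sup_{z∈Σ_σ} |2^{ℓθ} ρ(2^k z) ψ(2^{k+ℓ} z)| ≤ C·2^{−δ|ℓ|}. Consequently ∑_{ℓ∈ℤ} sup_{z∈Σ_σ} |2^{ℓθ} ρ(2^k z) ψ(2^{k+ℓ} z)| < ∞, uniformly in k. -/

import Mathlib

open scoped Real

noncomputable section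

lemma sector_lower {σ : ℝ} (hσπ : σ < Real.pi) {w : ℂ} (hw : w ≠ 0)
    (harg : |Complex.arg w| < σ) :
    Real.sqrt ((1 + Real.cos σ) / 4) * (1 + ‖w‖) ≤ ‖1 + w‖ := by
  set t := ‖w‖ with ht_def
  set c := Real.cos (Complex.arg w) with hc_def
  have ht : 0 ≤ t := norm_nonneg w
  have ht0 : 0 < t := norm_pos_iff.mpr hw
  have hc' : Real.cos σ ≤ c := by
    have := Real.cos_le_cos_of_nonneg_of_le_pi (abs_nonneg (Complex.arg w)) hσπ.le harg.le
    rwa [Real.cos_abs] at this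
  have hm : 0 ≤ (1 + Real.cos σ) / 4 := by
    have := Real.neg_one_le_cos σ; linarith
  have hre : w.re = t * c := by
    rw [hc_def, Complex.cos_arg hw, ← ht_def]; field_simp
  have him : w.re ^ 2 + w.im ^ 2 = t ^ 2 := by
    rw [ht_def, Complex.sq_norm, Complex.normSq_apply]; ring
  have h1 : (‖1 + w‖) ^ 2 = 1 + 2 * (t * c) + t ^ 2 := by
    rw [Complex.sq_norm, Complex.normSq_apply]
    simp only [Complex.add_re, Complex.add_im, Complex.one_re, Complex.one_im]
    nlinarith [hre, him]
  have key : (1 + Real.cos σ) / 4 * (1 + t) ^ 2 ≤ (‖1 + w‖) ^ 2 := by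
    rw [h1]
    nlinarith [mul_nonneg ht (sub_nonneg.2 hc'),
      mul_nonneg ht (show (0:ℝ) ≤ 1 + Real.cos σ by nlinarith [Real.neg_one_le_cos σ]),
      mul_nonneg (show (0:ℝ) ≤ 3 - Real.cos σ by nlinarith [Real.cos_le_one σ]) (sq_nonneg (1 - t))]
  calc Real.sqrt ((1 + Real.cos σ) / 4) * (1 + t)
      = Real.sqrt ((1 + Real.cos σ) / 4 * (1 + t) ^ 2) := by
        rw [Real.sqrt_mul hm, Real.sqrt_sq (by linarith)]
    _ ≤ Real.sqrt ((‖1 + w‖) ^ 2) := Real.sqrt_le_sqrt key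
    _ = ‖1 + w‖ := Real.sqrt_sq (norm_nonneg _)

/-- The open sector `Σ_σ = {z ∈ ℂ ∖ (-∞,0] : |arg z| < σ}`. -/
def Sector (σ : ℝ) : Set ℂ := {z : ℂ | z ≠ 0 ∧ |Complex.arg z| < σ}

/-- `ρ(2^k z) · ψ(2^{k+ℓ} z)` with `ρ(w) = w^α/(1+w)` and `ψ(w) = w^{1-α}/(1+w)`
(principal branch powers). -/
def rhoPsi (α : ℝ) (k ℓ : ℤ) (z : ℂ) : ℂ :=
  (((2 : ℂ) ^ k * z) ^ (α : ℂ) / (1 + (2 : ℂ) ^ k * z)) *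
    (((2 : ℂ) ^ (k + ℓ) * z) ^ (((1 - α : ℝ)) : ℂ) / (1 + (2 : ℂ) ^ (k + ℓ) * z))

set_option maxHeartbeats 1000000 in
lemma key_bound (σ α θ : ℝ) (hσ0 : 0 < σ) (hσπ : σ < Real.pi)
    (hα0 : 0 < α) (hα1 : α < 1) (hθ1 : α - 1 < θ) (hθ2 : θ < α)
    (k ℓ : ℤ) (z : ℂ) (hz : z ∈ Sector σ) :
    (2 : ℝ) ^ ((ℓ : ℝ) * θ) * ‖rhoPsi α k ℓ z‖
      ≤ (4 / (1 + Real.cos σ)) * (2 : ℝ) ^ (-(min (α - θ) (θ + 1 - α)) * |(ℓ : ℝ)|) := by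
  obtain ⟨hz0, harg⟩ := hz
  set δ := min (α - θ) (θ + 1 - α) with hδ_def
  have hδ1 : δ ≤ α - θ := min_le_left _ _
  have hδ2 : δ ≤ θ + 1 - α := min_le_right _ _
  have hcσ : -1 < Real.cos σ := by
    have := Real.cos_lt_cos_of_nonneg_of_le_pi hσ0.le le_rfl hσπ
    rwa [Real.cos_pi] at this
  set m := (1 + Real.cos σ) / 4 with hm_def
  have hm0 : 0 < m := by rw [hm_def]; linarith
  set sm := Real.sqrt m with hsm_def
  have hsm2 : sm ^ 2 = m := Real.sq_sqrt hm0.le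
  set w₁ := (2 : ℂ) ^ k * z with hw₁_def
  set w₂ := (2 : ℂ) ^ (k + ℓ) * z with hw₂_def
  have h2z : ∀ n : ℤ, (2 : ℂ) ^ n ≠ 0 := fun n => zpow_ne_zero n two_ne_zero
  have hw₁0 : w₁ ≠ 0 := mul_ne_zero (h2z k) hz0
  have hw₂0 : w₂ ≠ 0 := mul_ne_zero (h2z (k + ℓ)) hz0
  have hargn : ∀ n : ℤ, |Complex.arg ((2 : ℂ) ^ n * z)| < σ := by
    intro n
    rw [show (2 : ℂ) ^ n * z = (((2:ℝ) ^ n : ℝ) : ℂ) * z from by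
        rw [Complex.ofReal_zpow]; norm_num,
      Complex.arg_real_mul z (by positivity : (0:ℝ) < (2:ℝ) ^ n)]
    exact harg
  have habsn : ∀ n : ℤ, ‖(2 : ℂ) ^ n * z‖ = (2 : ℝ) ^ n * ‖z‖ := by
    intro n
    rw [norm_mul, norm_zpow, Complex.norm_two]
  set t := ‖w₁‖ with ht_def
  have ht0 : 0 < t := norm_pos_iff.mpr hw₁0
  set s := (2 : ℝ) ^ ((ℓ : ℝ)) with hs_def
  have hs0 : 0 < s := Real.rpow_pos_of_pos two_pos _
  have hw₂abs : ‖w₂‖ = s * t := by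
    rw [hw₂_def, habsn, ht_def, hw₁_def, habsn, zpow_add₀ (two_ne_zero) k ℓ,
      hs_def, Real.rpow_intCast]
    ring
  -- norm computation
  have hnorm : ‖rhoPsi α k ℓ z‖
      = (t ^ α * (s * t) ^ (1 - α)) / (‖1 + w₁‖ * ‖1 + w₂‖) := by
    rw [rhoPsi, norm_mul, norm_div, norm_div,
      Complex.norm_cpow_of_ne_zero hw₁0, Complex.norm_cpow_of_ne_zero hw₂0]
    simp only [Complex.ofReal_re, Complex.ofReal_im, mul_zero, Real.exp_zero, div_one]
    rw [← hw₁_def, ← hw₂_def, ← ht_def, hw₂abs, div_mul_div_comm]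
  -- lower bounds on denominators
  have hb1 : sm * (1 + t) ≤ ‖1 + w₁‖ := sector_lower hσπ hw₁0 (hargn k)
  have hb2 : sm * (1 + s * t) ≤ ‖1 + w₂‖ := by
    have h := sector_lower hσπ hw₂0 (hargn (k + ℓ))
    rw [hw₂abs] at h
    exact h
  have hsm0 : 0 < sm := Real.sqrt_pos.2 hm0
  have hD : m * ((1 + t) * (1 + s * t)) ≤ ‖1 + w₁‖ * ‖1 + w₂‖ := by
    calc m * ((1 + t) * (1 + s * t)) = (sm * (1 + t)) * (sm * (1 + s * t)) := by
          rw [← hsm2]; ring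
      _ ≤ ‖1 + w₁‖ * ‖1 + w₂‖ :=
          mul_le_mul hb1 hb2 (by positivity) (norm_nonneg _)
  -- numerator simplification
  have hN : t ^ α * (s * t) ^ (1 - α) = (2:ℝ) ^ ((ℓ:ℝ) * (1 - α)) * t := by
    rw [Real.mul_rpow hs0.le ht0.le, hs_def, ← Real.rpow_mul (by norm_num : (0:ℝ) ≤ 2),
      ← mul_assoc, mul_comm (t ^ α), mul_assoc, ← Real.rpow_add ht0]
    norm_num
  -- main exponent inequality
  have hmain : (2:ℝ) ^ ((ℓ:ℝ) * θ) * ((2:ℝ) ^ ((ℓ:ℝ) * (1 - α)) * t)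
      ≤ (2:ℝ) ^ (-δ * |(ℓ:ℝ)|) * ((1 + t) * (1 + s * t)) := by
    have hco : (2:ℝ) ^ ((ℓ:ℝ) * θ) * (2:ℝ) ^ ((ℓ:ℝ) * (1 - α))
        = (2:ℝ) ^ ((ℓ:ℝ) * (θ + 1 - α)) := by
      rw [← Real.rpow_add two_pos]; ring_nf
    rcases le_or_gt 0 (ℓ:ℝ) with hl | hl
    · have habs : |(ℓ:ℝ)| = (ℓ:ℝ) := abs_of_nonneg hl
      have hst : s * t ≤ (1 + t) * (1 + s * t) := by nlinarith [mul_pos hs0 ht0, ht0]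
      calc (2:ℝ) ^ ((ℓ:ℝ) * θ) * ((2:ℝ) ^ ((ℓ:ℝ) * (1 - α)) * t)
          = (2:ℝ) ^ ((ℓ:ℝ) * (θ + 1 - α)) * t := by rw [← mul_assoc, hco]
        _ ≤ (2:ℝ) ^ (-δ * (ℓ:ℝ) + (ℓ:ℝ)) * t := by
            apply mul_le_mul_of_nonneg_right _ ht0.le
            apply Real.rpow_le_rpow_of_exponent_le one_le_two
            nlinarith
        _ = (2:ℝ) ^ (-δ * |(ℓ:ℝ)|) * (s * t) := by
            rw [habs, Real.rpow_add two_pos, hs_def]; ring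
        _ ≤ (2:ℝ) ^ (-δ * |(ℓ:ℝ)|) * ((1 + t) * (1 + s * t)) := by
            apply mul_le_mul_of_nonneg_left hst (by positivity)
    · have habs : |(ℓ:ℝ)| = -(ℓ:ℝ) := abs_of_neg hl
      have hst : t ≤ (1 + t) * (1 + s * t) := by nlinarith [mul_pos hs0 ht0, ht0]
      calc (2:ℝ) ^ ((ℓ:ℝ) * θ) * ((2:ℝ) ^ ((ℓ:ℝ) * (1 - α)) * t)
          = (2:ℝ) ^ ((ℓ:ℝ) * (θ + 1 - α)) * t := by rw [← mul_assoc, hco]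
        _ ≤ (2:ℝ) ^ (-δ * |(ℓ:ℝ)|) * t := by
            apply mul_le_mul_of_nonneg_right _ ht0.le
            apply Real.rpow_le_rpow_of_exponent_le one_le_two
            rw [habs]; nlinarith
        _ ≤ (2:ℝ) ^ (-δ * |(ℓ:ℝ)|) * ((1 + t) * (1 + s * t)) := by
            apply mul_le_mul_of_nonneg_left hst (by positivity)
  -- assemble
  have hDpos : 0 < ‖1 + w₁‖ * ‖1 + w₂‖ := by
    calc (0:ℝ) < m * ((1 + t) * (1 + s * t)) := by positivity
      _ ≤ _ := hD
  rw [hnorm, hN, mul_div_assoc']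
  have hC : (4 / (1 + Real.cos σ)) * (2:ℝ) ^ (-δ * |(ℓ:ℝ)|) = (2:ℝ) ^ (-δ * |(ℓ:ℝ)|) / m := by
    rw [hm_def]; field_simp
  rw [hC, div_le_div_iff₀ hDpos hm0]
  calc (2:ℝ) ^ ((ℓ:ℝ) * θ) * ((2:ℝ) ^ ((ℓ:ℝ) * (1 - α)) * t) * m
      ≤ ((2:ℝ) ^ (-δ * |(ℓ:ℝ)|) * ((1 + t) * (1 + s * t))) * m :=
        mul_le_mul_of_nonneg_right hmain hm0.le
    _ = (2:ℝ) ^ (-δ * |(ℓ:ℝ)|) * (m * ((1 + t) * (1 + s * t))) := by ring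
    _ ≤ (2:ℝ) ^ (-δ * |(ℓ:ℝ)|) * (‖1 + w₁‖ * ‖1 + w₂‖) :=
        mul_le_mul_of_nonneg_left hD (by positivity)

/-- Let `σ ∈ (0,π)`, `α ∈ (0,1)`, `θ ∈ (α−1, α)` and
`δ = min (α−θ) (θ+1−α) > 0`. Then there is `C > 0` such that for all `k, ℓ ∈ ℤ`,
`sup_{z ∈ Σ_σ} |2^{ℓθ} ρ(2^k z) ψ(2^{k+ℓ} z)| ≤ C · 2^{−δ|ℓ|}`; consequently
`∑_{ℓ ∈ ℤ} sup_{z ∈ Σ_σ} |2^{ℓθ} ρ(2^k z) ψ(2^{k+ℓ} z)| < ∞`, uniformly in `k`. -/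
theorem rho_psi_dyadic_decay (σ α θ : ℝ) (hσ0 : 0 < σ) (hσπ : σ < Real.pi)
    (hα0 : 0 < α) (hα1 : α < 1) (hθ1 : α - 1 < θ) (hθ2 : θ < α) :
    0 < min (α - θ) (θ + 1 - α) ∧
      ∃ C : ℝ, 0 < C ∧
        (∀ k ℓ : ℤ, ∀ z ∈ Sector σ,
          (2 : ℝ) ^ ((ℓ : ℝ) * θ) * ‖rhoPsi α k ℓ z‖
            ≤ C * (2 : ℝ) ^ (-(min (α - θ) (θ + 1 - α)) * |(ℓ : ℝ)|)) ∧
        ∀ k : ℤ, Summable fun ℓ : ℤ =>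
          ⨆ z ∈ Sector σ, (2 : ℝ) ^ ((ℓ : ℝ) * θ) * ‖rhoPsi α k ℓ z‖ := by
  have hδ0 : 0 < min (α - θ) (θ + 1 - α) := lt_min (by linarith) (by linarith)
  refine ⟨hδ0, 4 / (1 + Real.cos σ), ?_, ?_, ?_⟩
  · have hcσ : -1 < Real.cos σ := by
      have := Real.cos_lt_cos_of_nonneg_of_le_pi hσ0.le le_rfl hσπ
      rwa [Real.cos_pi] at this
    have h1 : (0:ℝ) < 1 + Real.cos σ := by linarith
    positivity
  · intro k ℓ z hz
    exact key_bound σ α θ hσ0 hσπ hα0 hα1 hθ1 hθ2 k ℓ z hz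
  · intro k
    set δ := min (α - θ) (θ + 1 - α) with hδ_def
    have hcσ : -1 < Real.cos σ := by
      have := Real.cos_lt_cos_of_nonneg_of_le_pi hσ0.le le_rfl hσπ
      rwa [Real.cos_pi] at this
    have h1c : (0:ℝ) < 1 + Real.cos σ := by linarith
    have hC0 : (0:ℝ) < 4 / (1 + Real.cos σ) := by positivity
    have hr1 : (2:ℝ) ^ (-δ) < 1 :=
      Real.rpow_lt_one_of_one_lt_of_neg one_lt_two (by linarith)
    have hkey : ∀ n : ℕ, ∀ ℓ : ℤ, |(ℓ:ℝ)| = (n:ℝ) →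
        (2:ℝ) ^ (-δ * |(ℓ:ℝ)|) = ((2:ℝ) ^ (-δ)) ^ n := by
      intro n ℓ h
      rw [h, ← Real.rpow_natCast ((2:ℝ) ^ (-δ)) n, ← Real.rpow_mul (by norm_num : (0:ℝ) ≤ 2)]
    have hgeo : Summable (fun n : ℕ => ((2:ℝ) ^ (-δ)) ^ n) :=
      summable_geometric_of_lt_one (by positivity) hr1
    have hsum : Summable (fun ℓ : ℤ => (2:ℝ) ^ (-δ * |(ℓ:ℝ)|)) := by
      apply Summable.of_nat_of_neg
      · exact hgeo.congr fun n => (hkey n n (by simp)).symm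
      · exact hgeo.congr fun n => (hkey n (-n) (by simp)).symm
    apply Summable.of_nonneg_of_le
      (fun ℓ => Real.iSup_nonneg fun z => Real.iSup_nonneg fun _ => by positivity)
      (fun ℓ => ?_) (hsum.mul_left (4 / (1 + Real.cos σ)))
    have hb : (0:ℝ) ≤ 4 / (1 + Real.cos σ) * (2:ℝ) ^ (-δ * |(ℓ:ℝ)|) :=
      mul_nonneg hC0.le (Real.rpow_nonneg (by norm_num) _)
    apply Real.iSup_le (fun z => Real.iSup_le (fun hz => ?_) hb) hb
    exact key_bound σ α θ hσ0 hσπ hα0 hα1 hθ1 hθ2 k ℓ z hz
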